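/- Let a and b be nonempty lists of even nonzero integers and let c be an integer with |2c| ≥ 4 (i.e. |c| ≥ 2). Then d([a ⧺ (2c) ⧺ b]) = 1 + d([a]) + d([b]), where ⧺ denotes list concatenation and (2c) is the one-entry list containing 2c. -/

import Mathlib

/-- The continued fraction value `[a₁, …, aₙ] = 1/(a₁ + 1/(a₂ + ⋯ + 1/aₙ))` of a
list of integers, defined recursively with `[] = 0`, using the total division of `ℚ`. -/
def cfVal : List ℤ → ℚ
  | [] => 0
  | a :: l => 1 / ((a : ℚ) + cfVal l)

/-- `u` and `v` are the two Farey parents of `x`: there are integers `a, b, c, d` with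
`1 ≤ b, d`, `b + d = q`, `a + c = p`, `a·d − b·c = ±1`, `u = a/b` and `v = c/d`,
where `x = p/q` in lowest terms. -/
def IsFareyParents (x u v : ℚ) : Prop :=
  ∃ a b c d : ℤ, 1 ≤ b ∧ 1 ≤ d ∧ b + d = (x.den : ℤ) ∧ a + c = x.num ∧
    (a * d - b * c = 1 ∨ a * d - b * c = -1) ∧
    u = (a : ℚ) / (b : ℚ) ∧ v = (c : ℚ) / (d : ℚ)

/-- The graph of the depth function on `ℚ`: integers have depth `0`, and otherwise
`d(x) = 1 + min(d(u), d(v))` where `u, v` are the two Farey parents of `x`. -/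
inductive DepthRel : ℚ → ℕ → Prop
  | int (x : ℚ) (h : x.den = 1) : DepthRel x 0
  | step (x u v : ℚ) (m k : ℕ) (h : x.den ≠ 1) (hp : IsFareyParents x u v)
      (hu : DepthRel u m) (hv : DepthRel v k) : DepthRel x (1 + min m k)

/-- The depth `d(x)` of a rational number. -/
noncomputable def fareyDepth (x : ℚ) : ℕ := sInf {n | DepthRel x n}

namespace Stmt8Aux

lemma sign_cases (a : ℤ) (ha : 2 ≤ |a|) :
    (a.sign = 1 ∧ 2 ≤ a) ∨ (a.sign = -1 ∧ a ≤ -2) := by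
  rcases lt_trichotomy 0 a with h | h | h
  · left; exact ⟨Int.sign_eq_one_of_pos h, by rw [abs_of_pos h] at ha; omega⟩
  · exfalso; rw [← h] at ha; simp at ha
  · right; exact ⟨Int.sign_eq_neg_one_of_neg h, by rw [abs_of_neg h] at ha; omega⟩

/-- generalized continued fraction with seed value -/
def gcf : List ℤ → ℚ → ℚ
  | [], y => y
  | a :: l, y => 1 / ((a : ℚ) + gcf l y)

lemma gcf_append (l₁ l₂ : List ℤ) (y : ℚ) : gcf (l₁ ++ l₂) y = gcf l₁ (gcf l₂ y) := by
  induction l₁ with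
  | nil => rfl
  | cons a l ih => simp [gcf, ih]

lemma cfVal_eq_gcf (l : List ℤ) : cfVal l = gcf l 0 := by
  induction l with
  | nil => rfl
  | cons a l ih => simp [cfVal, gcf, ih]

lemma gcf_fold (l : List ℤ) (b e : ℤ) (he : e = 1 ∨ e = -1) :
    gcf (l ++ [b, e]) 0 = gcf (l ++ [b + e]) 0 := by
  rw [gcf_append, gcf_append]
  congr 1
  rcases he with rfl | rfl <;> norm_num [gcf]

def mat : List ℤ → (ℤ × ℤ) × (ℤ × ℤ)
  | [] => ((1, 0), (0, 1))
  | a :: r => ((mat r).2, ((mat r).1.1 + a * (mat r).2.1, (mat r).1.2 + a * (mat r).2.2))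

def Good (r : List ℤ) : Prop := ∀ a ∈ r, 2 ≤ |a|

lemma eval (r : List ℤ) (hr : Good r) : ∀ py qy : ℤ, |py| ≤ |qy| → qy ≠ 0 →
    gcf r.reverse ((py : ℚ) / qy)
      = ((mat r).1.1 * py + (mat r).2.1 * qy : ℤ) / ((mat r).1.2 * py + (mat r).2.2 * qy : ℤ)
    ∧ |(mat r).1.1 * py + (mat r).2.1 * qy| ≤ |(mat r).1.2 * py + (mat r).2.2 * qy|
    ∧ ((mat r).1.2 * py + (mat r).2.2 * qy) ≠ 0 := by
  induction r with
  | nil =>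
    intro py qy h1 h0
    refine ⟨?_, by simpa [mat], by simpa [mat]⟩
    simp [mat, gcf]
  | cons a r ih =>
    intro py qy h1 h0
    have ha : 2 ≤ |a| := hr a (by simp)
    have hr' : Good r := fun x hx => hr x (by simp [hx])
    have habs : |a * qy| ≤ |a * qy + py| + |py| := by
      calc |a * qy| = |(a * qy + py) - py| := by ring_nf
      _ ≤ |a * qy + py| + |py| := abs_sub _ _
    have hqy1 : 1 ≤ |qy| := Int.one_le_abs h0
    have hq' : |qy| ≤ |a * qy + py| := by
      rw [abs_mul] at habs; nlinarith
    have h0' : a * qy + py ≠ 0 := by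
      intro h; rw [h] at hq'; simp at hq'; omega
    have key : gcf (a :: r).reverse ((py : ℚ) / qy)
        = gcf r.reverse ((qy : ℚ) / (a * qy + py : ℤ)) := by
      rw [List.reverse_cons, gcf_append]
      congr 1
      have hqQ : (qy : ℚ) ≠ 0 := Int.cast_ne_zero.mpr h0
      have h0Q : ((a * qy + py : ℤ) : ℚ) ≠ 0 := Int.cast_ne_zero.mpr h0'
      have hstep : (a : ℚ) + (py : ℚ) / (qy : ℚ) = ((a * qy + py : ℤ) : ℚ) / (qy : ℚ) := by
        push_cast; field_simp
      simp only [gcf, hstep, one_div_div]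
    rw [key]
    obtain ⟨e1, e2, e3⟩ := ih hr' qy (a * qy + py) hq' h0'
    refine ⟨?_, ?_, ?_⟩
    · rw [e1]; congr 1 <;> · push_cast; simp only [mat]; push_cast; ring
    · have : (mat (a :: r)).1.1 * py + (mat (a :: r)).2.1 * qy
          = (mat r).1.1 * qy + (mat r).2.1 * (a * qy + py) := by simp only [mat]; ring
      have h2 : (mat (a :: r)).1.2 * py + (mat (a :: r)).2.2 * qy
          = (mat r).1.2 * qy + (mat r).2.2 * (a * qy + py) := by simp only [mat]; ring
      rw [this, h2]; exact e2
    · have h2 : (mat (a :: r)).1.2 * py + (mat (a :: r)).2.2 * qy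
          = (mat r).1.2 * qy + (mat r).2.2 * (a * qy + py) := by simp only [mat]; ring
      rw [h2]; exact e3


lemma mat_det (r : List ℤ) :
    (mat r).1.1 * (mat r).2.2 - (mat r).2.1 * (mat r).1.2 = 1 ∨
    (mat r).1.1 * (mat r).2.2 - (mat r).2.1 * (mat r).1.2 = -1 := by
  induction r with
  | nil => left; norm_num [mat]
  | cons a r ih =>
    rcases ih with h | h
    · right; simp only [mat]; linear_combination -h
    · left; simp only [mat]; linear_combination -h

lemma mat_grow (r : List ℤ) (hr : Good r) :
    1 ≤ |(mat r).2.2| ∧ |(mat r).1.2| < |(mat r).2.2| := by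
  induction r with
  | nil => norm_num [mat]
  | cons a r ih =>
    have ha : 2 ≤ |a| := hr a (by simp)
    obtain ⟨ih1, ih2⟩ := ih (fun x hx => hr x (by simp [hx]))
    set P := (mat r).1.2
    set Q := (mat r).2.2
    have hnew1 : (mat (a :: r)).1.2 = Q := rfl
    have hnew2 : (mat (a :: r)).2.2 = P + a * Q := rfl
    rw [hnew1, hnew2]
    have habs : |a * Q| ≤ |P + a * Q| + |P| := by
      calc |a * Q| = |(P + a * Q) - P| := by ring_nf
      _ ≤ |P + a * Q| + |P| := abs_sub _ _
    rw [abs_mul] at habs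
    constructor <;> nlinarith

lemma mat_sign (a : ℤ) (r : List ℤ) (ha : 2 ≤ |a|) (hr : Good r) :
    0 < a * ((mat (a :: r)).1.2 * (mat (a :: r)).2.2) := by
  obtain ⟨h1, h2⟩ := mat_grow r hr
  set P := (mat r).1.2
  set Q := (mat r).2.2
  have hnew1 : (mat (a :: r)).1.2 = Q := rfl
  have hnew2 : (mat (a :: r)).2.2 = P + a * Q := rfl
  rw [hnew1, hnew2]
  have e1 : a * (Q * (P + a * Q)) = a * Q * P + (a*Q)*(a*Q) := by ring
  have h3 : -(|a * Q * P|) ≤ a * Q * P := neg_abs_le _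
  have h4 : |a * Q * P| = |a| * |Q| * |P| := by rw [abs_mul, abs_mul]
  have h5 : |a| * |Q| * |P| < |a| * |Q| * (|a| * |Q|) := by
    have : |P| < |a| * |Q| := by nlinarith
    have hpos : 0 < |a| * |Q| := by positivity
    exact mul_lt_mul_of_pos_left this hpos
  have h6 : (a*Q)*(a*Q) = (|a| * |Q|) * (|a| * |Q|) := by
    rw [← abs_mul]; rw [← sq, ← sq, sq_abs]
  nlinarith

def nrm : List ℤ → List ℤ
  | [] => []
  | [a] => [a]
  | a :: b :: r => if a = 1 ∨ a = -1 then nrm ((b + a) :: r) else a :: b :: r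
termination_by l => l.length
decreasing_by simp

def mu (r : List ℤ) : ℕ := (r.map Int.natAbs).sum + r.length

lemma mu_cons (a : ℤ) (r : List ℤ) : mu (a :: r) = a.natAbs + 1 + mu r := by
  simp [mu]; omega

lemma mu_nrm_le : ∀ r : List ℤ, mu (nrm r) ≤ mu r := by
  intro r
  induction r using nrm.induct with
  | case1 => simp [nrm]
  | case2 a => simp [nrm]
  | case3 a b r h ih =>
    rw [nrm, if_pos h]
    refine le_trans ih ?_
    rw [mu_cons, mu_cons, mu_cons]
    have : (b + a).natAbs ≤ b.natAbs + a.natAbs := Int.natAbs_add_le b a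
    omega
  | case4 a b r h =>
    rw [nrm, if_neg h]

def D : List ℤ → ℕ
  | [] => 0
  | a :: r =>
    if a = 1 ∨ a = -1 ∨ a = 0 then 0
    else 1 + min (D r) (D (nrm ((a - a.sign) :: r)))
termination_by l => mu l
decreasing_by
  · simp [mu]; omega
  · have h1 := mu_nrm_le ((a - a.sign) :: r)
    simp only [mu, List.map_cons, List.sum_cons, List.length_cons] at h1 ⊢
    have h2 : (a - a.sign).natAbs + 1 ≤ a.natAbs := by
      rcases lt_trichotomy 0 a with h | h | h
      · rw [Int.sign_eq_one_of_pos h]; omega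
      · omega
      · rw [Int.sign_eq_neg_one_of_neg h]; omega
    omega

lemma nrm_nil : nrm [] = [] := by rw [nrm]

lemma nrm_single (a : ℤ) : nrm [a] = [a] := by rw [nrm]

lemma nrm_cons2 (a b : ℤ) (r : List ℤ) :
    nrm (a :: b :: r) = if a = 1 ∨ a = -1 then nrm ((b + a) :: r) else a :: b :: r := by
  rw [nrm]

lemma D_nil : D [] = 0 := by rw [D]

lemma D_cons (a : ℤ) (r : List ℤ) (ha : 2 ≤ |a|) :
    D (a :: r) = 1 + min (D r) (D (nrm ((a - a.sign) :: r))) := by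
  have h2 := le_abs.mp ha
  have h1 : ¬(a = 1 ∨ a = -1 ∨ a = 0) := by rintro (rfl | rfl | rfl) <;> omega
  rw [D, if_neg h1]

lemma D_one (e : ℤ) (he : e = 1 ∨ e = -1) (r : List ℤ) : D (e :: r) = 0 := by
  rw [D, if_pos (by tauto)]

lemma one_le_abs_add (b x : ℤ) (hb : 2 ≤ |b|) (hx : x = 1 ∨ x = -1) : 1 ≤ |b + x| := by
  have := le_abs.mp hb
  rw [le_abs]
  rcases hx with rfl | rfl <;> omega

lemma two_le_abs_add (m x : ℤ) (hm : 3 ≤ |m|) (hx : x = 1 ∨ x = -1) : 2 ≤ |m + x| := by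
  have := le_abs.mp hm
  rw [le_abs]
  rcases hx with rfl | rfl <;> omega

lemma nrm_of_big (a : ℤ) (ha : 2 ≤ |a|) (r : List ℤ) : nrm (a :: r) = a :: r := by
  have h2 := le_abs.mp ha
  have h1 : ¬(a = 1 ∨ a = -1) := by rintro (rfl | rfl) <;> omega
  cases r with
  | nil => exact nrm_single a
  | cons b r => rw [nrm_cons2, if_neg h1]

/-- nrm preserves the continued fraction value -/
lemma nrm_val : ∀ r : List ℤ, cfVal (nrm r).reverse = cfVal r.reverse := by
  intro r
  induction r using nrm.induct with
  | case1 => rw [nrm_nil]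
  | case2 a => rw [nrm_single]
  | case3 a b r h ih =>
    rw [nrm_cons2, if_pos h, ih]
    have e1 : (a :: b :: r).reverse = r.reverse ++ [b, a] := by simp
    have e2 : ((b + a) :: r).reverse = r.reverse ++ [b + a] := by simp
    rw [e1, e2, cfVal_eq_gcf, cfVal_eq_gcf, gcf_fold r.reverse b a h]
  | case4 a b r h => rw [nrm_cons2, if_neg h]

/-- classification of nrm output -/
lemma nrm_cases : ∀ (r : List ℤ) (x : ℤ), 1 ≤ |x| → Good r →
    (nrm (x :: r) = [1] ∨ nrm (x :: r) = [-1]) ∨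
    (Good (nrm (x :: r)) ∧ nrm (x :: r) ≠ []) := by
  intro r
  induction r with
  | nil =>
    intro x hx _
    by_cases h : x = 1 ∨ x = -1
    · left; rw [nrm_single]
      rcases h with rfl | rfl
      · left; rfl
      · right; rfl
    · right
      rw [nrm_single]
      push_neg at h
      refine ⟨?_, by simp⟩
      intro y hy
      simp only [List.mem_singleton] at hy
      subst hy
      rw [le_abs] at hx ⊢
      omega
  | cons b r ih =>
    intro x hx hg
    have hb : 2 ≤ |b| := hg b (by simp)
    have hr : Good r := fun y hy => hg y (by simp [hy])
    by_cases h : x = 1 ∨ x = -1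
    · rw [nrm_cons2, if_pos h]
      exact ih (b + x) (one_le_abs_add b x hb h) hr
    · rw [nrm_cons2, if_neg h]
      right
      refine ⟨?_, by simp⟩
      intro y hy
      simp only [List.mem_cons] at hy
      rcases hy with rfl | hy
      · push_neg at h
        rw [le_abs] at hx ⊢
        omega
      · exact hg y (by simp [hy])

/-- nrm on an appended list -/
lemma nrm_append : ∀ (r : List ℤ) (x : ℤ), 1 ≤ |x| → Good r → ∀ (m : ℤ) (v : List ℤ), 3 ≤ |m| →
    (∃ e : ℤ, (e = 1 ∨ e = -1) ∧ nrm (x :: r) = [e] ∧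
        nrm ((x :: r) ++ m :: v) = (m + e) :: v) ∨
    (Good (nrm (x :: r)) ∧ nrm (x :: r) ≠ [] ∧
      nrm ((x :: r) ++ m :: v) = nrm (x :: r) ++ m :: v) := by
  intro r
  induction r with
  | nil =>
    intro x hx _ m v hm
    by_cases h : x = 1 ∨ x = -1
    · left
      refine ⟨x, h, nrm_single x, ?_⟩
      show nrm (x :: m :: v) = (m + x) :: v
      rw [nrm_cons2, if_pos h]
      exact nrm_of_big (m + x) (two_le_abs_add m x hm h) v
    · right
      have hx2 : 2 ≤ |x| := by
        push_neg at h
        rw [le_abs] at hx ⊢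
        omega
      refine ⟨?_, ?_, ?_⟩
      · rw [nrm_single]
        intro y hy
        simp only [List.mem_singleton] at hy
        subst hy; exact hx2
      · rw [nrm_single]; simp
      · show nrm (x :: m :: v) = nrm [x] ++ m :: v
        rw [nrm_cons2, if_neg h, nrm_single]
        rfl
  | cons b r ih =>
    intro x hx hg m v hm
    have hb : 2 ≤ |b| := hg b (by simp)
    have hr : Good r := fun y hy => hg y (by simp [hy])
    by_cases h : x = 1 ∨ x = -1
    · have e1 : nrm (x :: b :: r) = nrm ((b + x) :: r) := by rw [nrm_cons2, if_pos h]
      have e2 : nrm ((x :: b :: r) ++ m :: v) = nrm ((b + x) :: (r ++ m :: v)) := by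
        show nrm (x :: b :: (r ++ m :: v)) = _
        rw [nrm_cons2, if_pos h]
      rw [e1, e2]
      exact ih (b + x) (one_le_abs_add b x hb h) hr m v hm
    · right
      have hx2 : 2 ≤ |x| := by
        push_neg at h
        rw [le_abs] at hx ⊢
        omega
      have e1 : nrm (x :: b :: r) = x :: b :: r := by rw [nrm_cons2, if_neg h]
      have e2 : nrm ((x :: b :: r) ++ m :: v) = x :: b :: (r ++ m :: v) := by
        show nrm (x :: b :: (r ++ m :: v)) = _
        rw [nrm_cons2, if_neg h]
      rw [e1, e2]
      refine ⟨?_, by simp, rfl⟩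
      intro y hy
      rcases List.mem_cons.mp hy with rfl | hy
      · exact hx2
      · exact hg y hy

lemma val_head (r : List ℤ) (hr : Good r) (z : ℤ) (hz : 1 ≤ |z|) :
    cfVal (z :: r).reverse
      = (((mat r).1.1 + (mat r).2.1 * z : ℤ) : ℚ) / (((mat r).1.2 + (mat r).2.2 * z : ℤ) : ℚ)
    ∧ |(mat r).1.1 + (mat r).2.1 * z| ≤ |(mat r).1.2 + (mat r).2.2 * z|
    ∧ ((mat r).1.2 + (mat r).2.2 * z) ≠ 0 := by
  have hz0 : z ≠ 0 := by rintro rfl; simp at hz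
  have h1 : |(1 : ℤ)| ≤ |z| := by simpa using hz
  obtain ⟨e1, e2, e3⟩ := eval r hr 1 z h1 hz0
  simp only [mul_one] at e1 e2 e3
  have hrev : (z :: r).reverse = r.reverse ++ [z] := by simp
  have hgcf : cfVal (z :: r).reverse = gcf r.reverse (((1 : ℤ) : ℚ) / (z : ℚ)) := by
    rw [hrev, cfVal_eq_gcf, gcf_append]
    congr 1
    simp [gcf]
  rw [hgcf, e1]
  exact ⟨rfl, e2, e3⟩

lemma val_self (r : List ℤ) (hr : Good r) :
    cfVal r.reverse = (((mat r).2.1 : ℤ) : ℚ) / (((mat r).2.2 : ℤ) : ℚ) := by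
  obtain ⟨e1, _, _⟩ := eval r hr 0 1 (by norm_num) one_ne_zero
  have : cfVal r.reverse = gcf r.reverse (((0 : ℤ) : ℚ) / ((1 : ℤ) : ℚ)) := by
    rw [cfVal_eq_gcf]; norm_num
  rw [this, e1]
  congr 2 <;> ring

lemma isFareyParents_of (pa qa pb qb ε σ : ℤ) (u v x : ℚ)
    (hε : ε = 1 ∨ ε = -1) (hσ : σ = 1 ∨ σ = -1)
    (h1 : 1 ≤ ε * qa) (h2 : ε * qa < σ * qb)
    (hdet : pa * qb - pb * qa = 1 ∨ pa * qb - pb * qa = -1)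
    (hnum : x.num = σ * pb) (hden : (x.den : ℤ) = σ * qb)
    (hu : u = ((pa : ℤ) : ℚ) / ((qa : ℤ) : ℚ))
    (hv : v = ((pb - (σ * ε) * pa : ℤ) : ℚ) / ((qb - (σ * ε) * qa : ℤ) : ℚ)) :
    IsFareyParents x u v := by
  refine ⟨ε * pa, ε * qa, σ * pb - ε * pa, σ * qb - ε * qa, h1, by linarith, ?_, ?_, ?_, ?_, ?_⟩
  · rw [hden]; ring
  · rw [hnum]; ring
  · rcases hε with rfl | rfl <;> rcases hσ with rfl | rfl <;> rcases hdet with h | h <;>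
      first
        | (left; linear_combination h)
        | (right; linear_combination h)
        | (left; linear_combination -h)
        | (right; linear_combination -h)
  · rw [hu]
    rcases hε with rfl | rfl
    · norm_num
    · push_cast
      rw [show ((-1 : ℚ) * pa) = -(pa : ℚ) by ring, show ((-1 : ℚ) * qa) = -(qa : ℚ) by ring,
        neg_div_neg_eq]
  · rw [hv]
    rcases hσ with rfl | rfl
    · push_cast; norm_num
    · push_cast
      rw [show ((-1 : ℚ) * pb - ε * pa) = -((pb : ℚ) - (-1 * ε) * pa) by ring,
        show ((-1 : ℚ) * qb - ε * qa) = -((qb : ℚ) - (-1 * ε) * qa) by ring,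
        neg_div_neg_eq]

theorem parents (a : ℤ) (r : List ℤ) (ha : 2 ≤ |a|) (hr : Good r) :
    IsFareyParents (cfVal (a :: r).reverse) (cfVal r.reverse)
      (cfVal ((a - a.sign) :: r).reverse)
    ∧ (cfVal (a :: r).reverse).den ≠ 1 := by
  have hgood : Good (a :: r) := by
    intro y hy; rcases List.mem_cons.mp hy with rfl | hy
    · exact ha
    · exact hr y hy
  set P1 := (mat r).1.1 with hP1
  set Q1 := (mat r).1.2 with hQ1
  set pa := (mat r).2.1 with hpa
  set qa := (mat r).2.2 with hqa
  set pb := P1 + a * pa with hpb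
  set qb := Q1 + a * qa with hqb
  have hmA : (mat (a :: r)).1.1 = pa := rfl
  have hmB : (mat (a :: r)).1.2 = qa := rfl
  have hmC : (mat (a :: r)).2.1 = pb := rfl
  have hmD : (mat (a :: r)).2.2 = qb := rfl
  -- value of x
  obtain ⟨ex, exabs, exne⟩ := val_head r hr a (by omega)
  have hx : cfVal (a :: r).reverse = ((pb : ℤ) : ℚ) / ((qb : ℤ) : ℚ) := by
    rw [ex]; congr 2 <;> ring
  -- value of u
  have hu := val_self r hr
  -- value of v
  have hzsv : 1 ≤ |a - a.sign| := by
    rcases sign_cases a ha with ⟨hs, h2⟩ | ⟨hs, h2⟩ <;> rw [hs, le_abs] <;> omega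
  obtain ⟨ev, _, _⟩ := val_head r hr (a - a.sign) hzsv
  have hv : cfVal ((a - a.sign) :: r).reverse
      = ((pb - a.sign * pa : ℤ) : ℚ) / ((qb - a.sign * qa : ℤ) : ℚ) := by
    rw [ev]; congr 2 <;> ring
  -- invariants
  obtain ⟨hqa1', _⟩ := mat_grow r hr
  have hqa1 : 1 ≤ |qa| := hqa1'
  obtain ⟨hqb1', hlt'⟩ := mat_grow (a :: r) hgood
  have hqb1 : 1 ≤ |qb| := hqb1'
  have hlt : |qa| < |qb| := hlt'
  have hdet0 : pa * qb - pb * qa = 1 ∨ pa * qb - pb * qa = -1 := mat_det (a :: r)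
  have hsgn : 0 < a * (qa * qb) := mat_sign a r ha hr
  -- choose ε, σ
  have hqa0 : qa ≠ 0 := by intro h; rw [h] at hqa1; simp at hqa1
  have hqb0 : qb ≠ 0 := by intro h; rw [h] at hqb1; simp at hqb1
  obtain ⟨ε, hε, hεabs⟩ : ∃ ε : ℤ, (ε = 1 ∨ ε = -1) ∧ ε * qa = |qa| := by
    rcases abs_choice qa with h | h
    · exact ⟨1, Or.inl rfl, by rw [h]; ring⟩
    · exact ⟨-1, Or.inr rfl, by rw [h]; ring⟩
  obtain ⟨σ, hσ, hσabs⟩ : ∃ σ : ℤ, (σ = 1 ∨ σ = -1) ∧ σ * qb = |qb| := by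
    rcases abs_choice qb with h | h
    · exact ⟨1, Or.inl rfl, by rw [h]; ring⟩
    · exact ⟨-1, Or.inr rfl, by rw [h]; ring⟩
  have h1 : 1 ≤ ε * qa := by rw [hεabs]; exact hqa1
  have h2 : ε * qa < σ * qb := by rw [hεabs, hσabs]; exact hlt
  -- sign of a equals σ * ε
  have hsign : a.sign = σ * ε := by
    have hq1 : (σ * ε) * (qa * qb) = |qa| * |qb| := by
      rw [← hεabs, ← hσabs]; ring
    have hq2 : 0 < |qa| * |qb| := by
      have := abs_pos.mpr hqa0
      have := abs_pos.mpr hqb0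
      positivity
    have hσε : σ * ε = 1 ∨ σ * ε = -1 := by
      rcases hε with rfl | rfl <;> rcases hσ with rfl | rfl <;> norm_num
    rcases hσε with h | h
    · rw [h, one_mul] at hq1
      have hpos : 0 < qa * qb := by linarith
      rcases mul_pos_iff.mp hsgn with ⟨ha', _⟩ | ⟨_, hneg⟩
      · rw [h]; exact Int.sign_eq_one_of_pos ha'
      · linarith
    · rw [h] at hq1 ⊢
      have hneg : qa * qb < 0 := by linarith
      rcases mul_pos_iff.mp hsgn with ⟨_, hpos⟩ | ⟨ha', _⟩
      · linarith
      · exact Int.sign_eq_neg_one_of_neg ha' 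
  -- coprimality and num/den of x
  have hcop : Nat.Coprime pb.natAbs qb.natAbs := by
    have : IsCoprime pb qb := by
      rcases hdet0 with h | h
      · exact ⟨-qa, pa, by linarith [h]⟩
      · exact ⟨qa, -pa, by linarith [h]⟩
    exact Int.isCoprime_iff_gcd_eq_one.mp this
  have hσqb : 0 < σ * qb := by linarith
  have hxσ : cfVal (a :: r).reverse = ((σ * pb : ℤ) : ℚ) / ((σ * qb : ℤ) : ℚ) := by
    rw [hx]
    rcases hσ with rfl | rfl
    · norm_num
    · push_cast
      rw [show ((-1 : ℚ) * pb) = -(pb : ℚ) by ring, show ((-1 : ℚ) * qb) = -(qb : ℚ) by ring,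
        neg_div_neg_eq]
  have hcopσ : Nat.Coprime (σ * pb).natAbs (σ * qb).natAbs := by
    rcases hσ with rfl | rfl <;> simpa [Int.natAbs_mul] using hcop
  have hnum : (cfVal (a :: r).reverse).num = σ * pb := by
    rw [hxσ]; exact Rat.num_div_eq_of_coprime hσqb hcopσ
  have hden : ((cfVal (a :: r).reverse).den : ℤ) = σ * qb := by
    rw [hxσ]; exact Rat.den_div_eq_of_coprime hσqb hcopσ
  constructor
  · refine isFareyParents_of pa qa pb qb ε σ _ _ _ hε hσ h1 h2 hdet0 hnum hden hu ?_
    rw [hv, hsign]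
  · intro hd1
    rw [hd1] at hden
    push_cast at hden
    linarith [hσabs, hqa1, hlt]

lemma natAbs_dec (a : ℤ) (ha : 2 ≤ |a|) : (a - a.sign).natAbs + 1 = a.natAbs := by
  rcases sign_cases a ha with ⟨hs, h2⟩ | ⟨hs, h2⟩ <;> rw [hs] <;> omega

lemma abs_dec (a : ℤ) (ha : 2 ≤ |a|) : 1 ≤ |a - a.sign| := by
  rcases sign_cases a ha with ⟨hs, h2⟩ | ⟨hs, h2⟩ <;> rw [hs, le_abs] <;> omega

lemma cfVal_one : cfVal [(1 : ℤ)] = 1 := by norm_num [cfVal]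

lemma cfVal_negone : cfVal [(-1 : ℤ)] = -1 := by norm_num [cfVal]

/-- Existence: DepthRel holds for good lists with the value D -/
theorem depthRel_D : ∀ (N : ℕ) (r : List ℤ), mu r ≤ N → Good r →
    DepthRel (cfVal r.reverse) (D r) := by
  intro N
  induction N with
  | zero =>
    intro r h hg
    have : r = [] := by cases r with
      | nil => rfl
      | cons a r => exfalso; simp [mu] at h
    subst this
    rw [D_nil]
    exact DepthRel.int _ rfl
  | succ N ih =>
    intro r h hg
    cases r with
    | nil => rw [D_nil]; exact DepthRel.int _ rfl
    | cons a r' =>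
      have ha : 2 ≤ |a| := hg a (by simp)
      have hr' : Good r' := fun y hy => hg y (by simp [hy])
      obtain ⟨hpar, hden⟩ := parents a r' ha hr'
      rw [D_cons a r' ha]
      have hmu : mu (a :: r') = a.natAbs + 1 + mu r' := mu_cons a r'
      have hu : DepthRel (cfVal r'.reverse) (D r') := by
        apply ih r' _ hr'
        have : 2 ≤ a.natAbs := by
          rcases le_abs.mp ha with h1 | h1 <;> omega
        omega
      have hmuw : mu ((a - a.sign) :: r') + 1 = mu (a :: r') := by
        rw [mu_cons, mu_cons, ← natAbs_dec a ha]
        omega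
      have hv : DepthRel (cfVal ((a - a.sign) :: r').reverse)
          (D (nrm ((a - a.sign) :: r'))) := by
        rw [← nrm_val ((a - a.sign) :: r')]
        rcases nrm_cases r' (a - a.sign) (abs_dec a ha) hr' with (h1 | h1) | ⟨hg2, _⟩
        · rw [h1, D_one 1 (Or.inl rfl)]
          refine DepthRel.int _ ?_
          show (cfVal [(1:ℤ)].reverse).den = 1
          norm_num [cfVal]
        · rw [h1, D_one (-1) (Or.inr rfl)]
          refine DepthRel.int _ ?_
          show (cfVal [(-1:ℤ)].reverse).den = 1
          norm_num [cfVal]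
        · apply ih _ _ hg2
          have h2 := mu_nrm_le ((a - a.sign) :: r')
          omega
      exact DepthRel.step _ _ _ _ _ hden hpar hu hv

lemma den_le_of_div (a b : ℤ) (hb : 1 ≤ b) : (((a : ℚ) / (b : ℚ)).den : ℤ) ≤ b := by
  have hdvd : ((((a : ℚ) / (b : ℚ)).den : ℤ)) ∣ b := by
    rw [← Rat.divInt_eq_div]; exact Rat.den_dvd a b
  exact Int.le_of_dvd (by omega) hdvd

lemma parents_den_lt {x u v : ℚ} (h : IsFareyParents x u v) :
    u.den < x.den ∧ v.den < x.den := by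
  obtain ⟨a, b, c, d, hb, hd, hbd, hac, hdet, hu, hv⟩ := h
  have h1 : ((u.den : ℤ)) ≤ b := by rw [hu]; exact den_le_of_div a b hb
  have h2 : ((v.den : ℤ)) ≤ d := by rw [hv]; exact den_le_of_div c d hd
  constructor <;> omega

lemma parents_unique {x : ℚ} {u v u' v' : ℚ}
    (h1 : IsFareyParents x u v) (h2 : IsFareyParents x u' v') :
    (u = u' ∧ v = v') ∨ (u = v' ∧ v = u') := by
  obtain ⟨a, b, c, d, hb, hd, hbd, hac, hdet, hu, hv⟩ := h1
  obtain ⟨a', b', c', d', hb', hd', hbd', hac', hdet', hu', hv'⟩ := h2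
  set p := x.num with hp
  set q := (x.den : ℤ) with hq
  have hq2 : 2 ≤ q := by omega
  have e1 : a * q - b * p = a * d - b * c := by
    have : d = q - b := by omega
    have hc : c = p - a := by omega
    rw [this, hc]; ring
  have e1' : a' * q - b' * p = a' * d' - b' * c' := by
    have : d' = q - b' := by omega
    have hc : c' = p - a' := by omega
    rw [this, hc]; ring
  have key : ∀ s s' : ℤ, a * q - b * p = s → a' * q - b' * p = s' →
      q ∣ b' * s - b * s' := by
    intro s s' hs hs'
    refine ⟨b' * a - b * a', ?_⟩
    have : b' * s - b * s' = b' * (a * q - b * p) - b * (a' * q - b' * p) := by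
      rw [hs, hs']
    rw [this]; ring
  -- case analysis on determinant signs
  rcases hdet with hs | hs <;> rcases hdet' with hs' | hs'
  -- same sign cases
  · left
    have hdvd : q ∣ b' - b := by
      have := key 1 1 (by rw [e1, hs]) (by rw [e1', hs'])
      simpa using this
    have hbb : b' = b := by
      have h0 : b' - b = 0 := Int.eq_zero_of_abs_lt_dvd hdvd (by rw [abs_lt]; omega)
      omega
    have haa : a' = a := by
      have h3 : a * q - b * p = 1 := by rw [e1, hs]
      have h4 : a' * q - b' * p = 1 := by rw [e1', hs']
      rw [hbb] at h4
      have : (a - a') * q = 0 := by linarith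
      have := mul_eq_zero.mp this
      rcases this with h5 | h5 <;> omega
    constructor
    · rw [hu, hu', haa, hbb]
    · rw [hv, hv']
      have : c' = c := by omega
      have hdd : d' = d := by omega
      rw [this, hdd]
  · right
    have hdvd : q ∣ b' + b := by
      have := key 1 (-1) (by rw [e1, hs]) (by rw [e1', hs'])
      have h7 : b' * 1 - b * (-1) = b' + b := by ring
      rwa [h7] at this
    have hbb : b' + b = q := by
      have h0 : (b' + b) - q = 0 := by
        exact Int.eq_zero_of_abs_lt_dvd (dvd_sub hdvd dvd_rfl)
          (by rw [abs_lt]; constructor <;> omega)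
      omega
    have h3 : a * q - b * p = 1 := by rw [e1, hs]
    have h4 : a' * q - b' * p = -1 := by rw [e1', hs']
    have haa : a' = p - a := by
      have h5 : (a' - (p - a)) * q = 0 := by
        have hb2 : b' = q - b := by omega
        rw [hb2] at h4
        linarith
      rcases mul_eq_zero.mp h5 with h6 | h6 <;> omega
    constructor
    · have hc2 : c' = a := by omega
      have hd2 : d' = b := by omega
      rw [hu, hv', hc2, hd2]
    · have hc2 : a' = c := by omega
      have hd2 : b' = d := by omega
      rw [hv, hu', hc2, hd2]
  · right
    have hdvd : q ∣ b' + b := by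
      have := key (-1) 1 (by rw [e1, hs]) (by rw [e1', hs'])
      have h7 : b' * (-1) - b * 1 = -(b' + b) := by ring
      rw [h7] at this
      exact (dvd_neg.mp this)
    have hbb : b' + b = q := by
      have h0 : (b' + b) - q = 0 := by
        exact Int.eq_zero_of_abs_lt_dvd (dvd_sub hdvd dvd_rfl)
          (by rw [abs_lt]; constructor <;> omega)
      omega
    have h3 : a * q - b * p = -1 := by rw [e1, hs]
    have h4 : a' * q - b' * p = 1 := by rw [e1', hs']
    have haa : a' = p - a := by
      have h5 : (a' - (p - a)) * q = 0 := by
        have hb2 : b' = q - b := by omega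
        rw [hb2] at h4
        linarith
      rcases mul_eq_zero.mp h5 with h6 | h6 <;> omega
    constructor
    · have hc2 : c' = a := by omega
      have hd2 : d' = b := by omega
      rw [hu, hv', hc2, hd2]
    · have hc2 : a' = c := by omega
      have hd2 : b' = d := by omega
      rw [hv, hu', hc2, hd2]

  · left
    have hdvd : q ∣ b' - b := by
      have := key (-1) (-1) (by rw [e1, hs]) (by rw [e1', hs'])
      have h7 : b' * (-1) - b * (-1) = -(b' - b) := by ring
      rw [h7] at this
      exact (dvd_neg.mp this)
    have hbb : b' = b := by
      have h0 : b' - b = 0 := Int.eq_zero_of_abs_lt_dvd hdvd (by rw [abs_lt]; omega)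
      omega
    have haa : a' = a := by
      have h3 : a * q - b * p = -1 := by rw [e1, hs]
      have h4 : a' * q - b' * p = -1 := by rw [e1', hs']
      rw [hbb] at h4
      have : (a - a') * q = 0 := by linarith
      rcases mul_eq_zero.mp this with h5 | h5 <;> omega
    constructor
    · rw [hu, hu', haa, hbb]
    · rw [hv, hv']
      have : c' = c := by omega
      have hdd : d' = d := by omega
      rw [this, hdd]
theorem depthRel_unique : ∀ (q : ℕ) (x : ℚ), x.den = q → ∀ n m, DepthRel x n → DepthRel x m → n = m := by
  intro q
  induction q using Nat.strong_induction_on with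
  | _ q ih =>
    intro x hx n m hn hm
    cases hn with
    | int _ h =>
      cases hm with
      | int _ _ => rfl
      | step _ u v m1 k1 h' hp hu hv => exact absurd h h'
    | step _ u v m1 k1 h hp hu hv =>
      cases hm with
      | int _ h' => exact absurd h' h
      | step _ u' v' m1' k1' h' hp' hu' hv' =>
        obtain ⟨hdu, hdv⟩ := parents_den_lt hp
        obtain ⟨hdu', hdv'⟩ := parents_den_lt hp'
        rw [hx] at hdu hdv hdu' hdv'
        rcases parents_unique hp hp' with ⟨he1, he2⟩ | ⟨he1, he2⟩
        · subst he1; subst he2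
          have q1 : m1 = m1' := ih u.den hdu u rfl m1 m1' hu hu'
          have q2 : k1 = k1' := ih v.den hdv v rfl k1 k1' hv hv'
          rw [q1, q2]
        · subst he1; subst he2
          have q1 : m1 = k1' := ih u.den hdu u rfl m1 k1' hu hv'
          have q2 : k1 = m1' := ih v.den hdv v rfl k1 m1' hv hu'
          rw [q1, q2, min_comm]

theorem fareyDepth_eq_of_depthRel {x : ℚ} {n : ℕ} (h : DepthRel x n) : fareyDepth x = n := by
  have : {m | DepthRel x m} = {n} := by
    ext m
    simp only [Set.mem_setOf_eq, Set.mem_singleton_iff]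
    exact ⟨fun hm => depthRel_unique x.den x rfl m n hm h, fun hm => hm ▸ h⟩
  rw [fareyDepth, this, csInf_singleton]

theorem fareyDepth_good (r : List ℤ) (hr : Good r) : fareyDepth (cfVal r.reverse) = D r :=
  fareyDepth_eq_of_depthRel (depthRel_D (mu r) r le_rfl hr)

lemma dec_facts (m : ℤ) (h : 2 ≤ |m|) :
    |m - m.sign| = |m| - 1 ∧ (m - m.sign).sign = m.sign := by
  rcases sign_cases m h with ⟨hs, h2⟩ | ⟨hs, h2⟩ <;> rw [hs]
  · rw [abs_of_pos (by omega : (0:ℤ) < m), abs_of_pos (by omega : (0:ℤ) < m - 1)]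
    exact ⟨rfl, by rw [Int.sign_eq_one_of_pos (by omega)]⟩
  · rw [abs_of_neg (by omega : m < 0), abs_of_neg (by omega : m - -1 < 0)]
    exact ⟨by ring, by rw [Int.sign_eq_neg_one_of_neg (by omega)]⟩

/-- L2 : bumping the head costs at most one -/
lemma D_bump (v : List ℤ) (hv : Good v) (ε : ℤ) (hε : ε = 1 ∨ ε = -1) :
    D v ≤ 1 + D (nrm (ε :: v)) := by
  cases v with
  | nil => rw [D_nil]; omega
  | cons b v' =>
    have hb : 2 ≤ |b| := hv b (by simp)
    have hv' : Good v' := fun y hy => hv y (by simp [hy])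
    have hfold : nrm (ε :: b :: v') = nrm ((b + ε) :: v') := by
      rw [nrm_cons2, if_pos hε]
    by_cases hc : ε = b.sign
    · -- increment : |b + ε| = |b| + 1
      have habs : |b + ε| = |b| + 1 := by
        rcases sign_cases b hb with ⟨hs, h2⟩ | ⟨hs, h2⟩ <;> rw [hc, hs] <;> rw [le_abs] at hb <;>
          [rw [abs_of_pos (by omega), abs_of_pos (by omega)];
           rw [abs_of_neg (by omega), abs_of_neg (by omega)]] <;> ring
      have hsgn : (b + ε).sign = b.sign := by
        rcases sign_cases b hb with ⟨hs, h2⟩ | ⟨hs, h2⟩ <;> rw [hc, hs]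
        · exact Int.sign_eq_one_of_pos (by omega)
        · exact Int.sign_eq_neg_one_of_neg (by omega)
      have hbig : nrm ((b + ε) :: v') = (b + ε) :: v' := nrm_of_big _ (by omega) _
      have hback : b + ε - (b + ε).sign = b := by rw [hsgn, hc]; ring
      have hD2 : D ((b + ε) :: v') = 1 + min (D v') (D (b :: v')) := by
        rw [D_cons _ _ (by omega), hback, nrm_of_big b hb]
      have hD1 : D (b :: v') ≤ 1 + D v' := by
        rw [D_cons b v' hb]; omega
      rw [hfold, hbig, hD2]
      omega
    · -- decrement : ε = -b.sign , b + ε = b - b.sign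
      have hεsgn : ε = -b.sign := by
        rcases sign_cases b hb with ⟨hs, _⟩ | ⟨hs, _⟩ <;> rw [hs] <;> rw [hs] at hc <;>
          rcases hε with rfl | rfl <;> simp_all
      have : b + ε = b - b.sign := by rw [hεsgn]; ring
      rw [hfold, this, D_cons b v' hb]
      omega

/-- L1 : prepending an entry of absolute value ≥ 3 adds exactly one -/
lemma D_big_cons : ∀ (k : ℕ) (m : ℤ), m.natAbs ≤ k → 3 ≤ |m| → ∀ v, Good v →
    D (m :: v) = 1 + D v := by
  intro k
  induction k with
  | zero => intro m hk h3 v hv; exfalso; rw [le_abs] at h3; omega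
  | succ k ih =>
    intro m hk h3 v hv
    obtain ⟨habs, hsgn⟩ := dec_facts m (by omega)
    rw [D_cons m v (by omega)]
    have hnrm : nrm ((m - m.sign) :: v) = (m - m.sign) :: v := nrm_of_big _ (by omega) _
    rw [hnrm]
    by_cases h4 : 4 ≤ |m|
    · have : D ((m - m.sign) :: v) = 1 + D v := by
        apply ih (m - m.sign) _ (by omega) v hv
        have h5 : (m - m.sign).natAbs = m.natAbs - 1 := by
          have := Int.abs_eq_natAbs m
          have := Int.abs_eq_natAbs (m - m.sign)
          omega
        have : 3 ≤ m.natAbs := by rw [Int.abs_eq_natAbs] at h3; omega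
        omega
      rw [this]
      omega
    · -- |m| = 3 : m - s = ±2, second decrement is a bump
      have hm : m = 3 ∨ m = -3 := by
        rcases abs_cases m with ⟨h, _⟩ | ⟨h, _⟩ <;> omega
      rcases hm with rfl | rfl
      · have e1 : (3:ℤ) - (3:ℤ).sign = 2 := by decide
        have e2 : (2:ℤ) - (2:ℤ).sign = 1 := by decide
        rw [e1]
        have hb2 : D v ≤ 1 + D (nrm (1 :: v)) := D_bump v hv 1 (Or.inl rfl)
        have h2 : D (2 :: v) = 1 + min (D v) (D (nrm ((2 - (2:ℤ).sign) :: v))) :=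
          D_cons 2 v (by norm_num)
        rw [e2] at h2
        omega
      · have e1 : (-3:ℤ) - (-3:ℤ).sign = -2 := by decide
        have e2 : (-2:ℤ) - (-2:ℤ).sign = -1 := by decide
        rw [e1]
        have hb2 : D v ≤ 1 + D (nrm (-1 :: v)) := D_bump v hv (-1) (Or.inr rfl)
        have h2 : D (-2 :: v) = 1 + min (D v) (D (nrm ((-2 - (-2:ℤ).sign) :: v))) :=
          D_cons (-2) v (by norm_num)
        rw [e2] at h2
        omega

theorem D_split : ∀ (n : ℕ) (u : List ℤ), mu u ≤ n → Good u → ∀ (m : ℤ), 4 ≤ |m| →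
    ∀ (v : List ℤ), Good v → D (u ++ m :: v) = 1 + D u + D v := by
  intro n
  induction n with
  | zero =>
    intro u hmu hu m hm v hv
    have : u = [] := by cases u with
      | nil => rfl
      | cons a u => exfalso; simp [mu] at hmu
    subst this
    simp only [List.nil_append]
    rw [D_big_cons m.natAbs m le_rfl (by omega) v hv, D_nil]
  | succ n ih =>
    intro u hmu hu m hm v hv
    cases u with
    | nil =>
      simp only [List.nil_append]
      rw [D_big_cons m.natAbs m le_rfl (by omega) v hv, D_nil]
    | cons a u' =>
      have ha : 2 ≤ |a| := hu a (by simp)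
      have hu' : Good u' := fun y hy => hu y (by simp [hy])
      have h3m : 3 ≤ |m| := by omega
      have e0 : (a :: u') ++ m :: v = a :: (u' ++ m :: v) := rfl
      rw [e0, D_cons a _ ha]
      have hIH1 : D (u' ++ m :: v) = 1 + D u' + D v := by
        apply ih u' _ hu' m hm v hv
        rw [mu_cons] at hmu
        omega
      have e2 : (a - a.sign) :: (u' ++ m :: v) = ((a - a.sign) :: u') ++ m :: v := rfl
      rw [e2]
      have hDa : D (a :: u') = 1 + min (D u') (D (nrm ((a - a.sign) :: u'))) := D_cons a u' ha
      rcases nrm_append u' (a - a.sign) (abs_dec a ha) hu' m v h3m with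
        ⟨e, he, hsing, happ⟩ | ⟨hg2, hne, happ⟩
      · rw [happ]
        have hbig : D ((m + e) :: v) = 1 + D v := by
          apply D_big_cons (m + e).natAbs (m + e) le_rfl _ v hv
          rcases he with rfl | rfl <;> rw [le_abs] at hm ⊢ <;> omega
        rw [hbig, hIH1, hDa, hsing, D_one e he]
        omega
      · rw [happ]
        have hmu2 : mu (nrm ((a - a.sign) :: u')) ≤ n := by
          have h5 := mu_nrm_le ((a - a.sign) :: u')
          have h6 : mu ((a - a.sign) :: u') + 1 = mu (a :: u') := by
            rw [mu_cons, mu_cons, ← natAbs_dec a ha]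
            omega
          omega
        have hIH2 : D (nrm ((a - a.sign) :: u') ++ m :: v)
            = 1 + D (nrm ((a - a.sign) :: u')) + D v := ih _ hmu2 hg2 m hm v hv
        rw [hIH2, hIH1, hDa]
        omega

lemma good_of_even (L : List ℤ) (hLe : ∀ a ∈ L, Even a ∧ a ≠ 0) : Good L.reverse := by
  intro a ha
  rw [List.mem_reverse] at ha
  obtain ⟨⟨k, hk⟩, h0⟩ := hLe a ha
  subst hk
  rw [le_abs]
  omega

theorem stmt8' (A B : List ℤ)
    (hAe : ∀ a ∈ A, Even a ∧ a ≠ 0) (hBe : ∀ b ∈ B, Even b ∧ b ≠ 0)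
    (c : ℤ) (hc : 4 ≤ |2 * c|) :
    fareyDepth (cfVal (A ++ (2 * c) :: B)) = 1 + fareyDepth (cfVal A) + fareyDepth (cfVal B) := by
  have hgA : Good A.reverse := good_of_even A hAe
  have hgB : Good B.reverse := good_of_even B hBe
  have hrev : (A ++ (2 * c) :: B).reverse = B.reverse ++ (2 * c) :: A.reverse := by
    simp
  have hgR : Good (B.reverse ++ (2 * c) :: A.reverse) := by
    intro y hy
    rcases List.mem_append.mp hy with hy | hy
    · exact hgB y hy
    · rcases List.mem_cons.mp hy with rfl | hy
      · omega
      · exact hgA y hy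
  have h1 : fareyDepth (cfVal A) = D A.reverse := by
    have := fareyDepth_good A.reverse hgA
    rwa [List.reverse_reverse] at this
  have h2 : fareyDepth (cfVal B) = D B.reverse := by
    have := fareyDepth_good B.reverse hgB
    rwa [List.reverse_reverse] at this
  have h3 : fareyDepth (cfVal (A ++ (2 * c) :: B)) = D (B.reverse ++ (2 * c) :: A.reverse) := by
    have := fareyDepth_good _ hgR
    rw [← hrev, List.reverse_reverse] at this
    rw [this, hrev]
  rw [h1, h2, h3, D_split (mu B.reverse) B.reverse le_rfl hgB (2 * c) hc A.reverse hgA]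
  omega

end Stmt8Aux

/-- If `a` and `b` are nonempty lists of even nonzero integers and `c` is an integer
with `|2c| ≥ 4`, then `d([a ⧺ (2c) ⧺ b]) = 1 + d([a]) + d([b])`. -/
theorem stmt8 (A B : List ℤ) (hA : A ≠ []) (hB : B ≠ [])
    (hAe : ∀ a ∈ A, Even a ∧ a ≠ 0) (hBe : ∀ b ∈ B, Even b ∧ b ≠ 0)
    (c : ℤ) (hc : 4 ≤ |2 * c|) :
    fareyDepth (cfVal (A ++ (2 * c) :: B)) = 1 + fareyDepth (cfVal A) + fareyDepth (cfVal B) :=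
  Stmt8Aux.stmt8' A B hAe hBe c hc
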